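/- Let A be any model of SAPP. Then there is no first-order formula φ(x,y) of the empty language (i.e., a formula built using only equality, with two free variables) such that A ⊨ ∀x∀y(O(x,y) ↔ φ(x,y)), where φ is interpreted in A via the inclusion of the empty language into L. (O is not definable by equality alone in any model of SAPP.) -/

import Mathlib

open FirstOrder Language Structure BoundedFormula

/-- The relation symbols of the language `L`: a single binary relation `O`. -/
inductive PerpRel : ℕ → Type
  | o : PerpRel 2

/-- The first-order language with a single binary relation symbol `O`. -/
def L : Language := ⟨fun _ => Empty, PerpRel⟩
  deriving IsRelational

/-- The binary relation symbol `O` of `L`. -/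
abbrev oSym : L.Relations 2 := .o

/-- `O(xᵢ, xⱼ)` as a bounded formula. -/
def oBF {n : ℕ} (i j : Fin n) : L.BoundedFormula Empty n :=
  oSym.boundedFormula₂ (&i) (&j)

/-- Finite conjunction of a list of bounded formulas. -/
def andAll {n : ℕ} : List (L.BoundedFormula Empty n) → L.BoundedFormula Empty n
  | [] => ⊤
  | φ :: l => φ ⊓ andAll l

/-- λ₁ₙ : ∀y₁…∀yₙ∀s(O(s,y₁) ∧ … ∧ O(s,yₙ) → ∃t(t ≠ y₁ ∧ … ∧ t ≠ yₙ ∧ O(s,t))).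
Variables: y₁,…,yₙ are de Bruijn indices 0,…,n-1, s is index n, t is index n+1. -/
def lam1 (n : ℕ) : L.Sentence :=
  ((andAll ((List.finRange n).map fun i => oBF (Fin.last n) i.castSucc)).imp
    ((andAll ((List.finRange n).map fun i =>
        ∼((&(Fin.last (n + 1))) =' (&(i.castSucc.castSucc)))) ⊓
      oBF ((Fin.last n).castSucc) (Fin.last (n + 1))).ex)).alls

/-- λ₂ₙ : ∀y₁…∀yₙ∃s(¬O(s,y₁) ∧ … ∧ ¬O(s,yₙ)).
Variables: y₁,…,yₙ are de Bruijn indices 0,…,n-1, s is index n. -/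
def lam2 (n : ℕ) : L.Sentence :=
  ((andAll ((List.finRange n).map fun i => ∼(oBF (Fin.last n) i.castSucc))).ex).alls

/-- λ₃ : ∀x ¬O(x,x). -/
def lam3 : L.Sentence := (∼(oBF (0 : Fin 1) 0)).alls

/-- λ₄ : ∀x∀y(O(x,y) → O(y,x)). -/
def lam4 : L.Sentence := ((oBF (0 : Fin 2) 1).imp (oBF (1 : Fin 2) 0)).alls

/-- λ₅ : ∀x∃y O(x,y). -/
def lam5 : L.Sentence := ((oBF (0 : Fin 2) 1).ex).alls

/-- λ₆ : ∀x∀y∀z∀t(O(x,z) ∧ O(y,z) ∧ O(x,t) → O(y,t)). -/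
def lam6 : L.Sentence :=
  ((oBF (0 : Fin 4) 2 ⊓ oBF (1 : Fin 4) 2 ⊓ oBF (0 : Fin 4) 3).imp (oBF (1 : Fin 4) 3)).alls

/-- The theory SAPP. -/
def SAPP : L.Theory :=
  {φ | ∃ n, 1 ≤ n ∧ φ = lam1 n} ∪ {φ | ∃ n, 2 ≤ n ∧ φ = lam2 n} ∪ {lam3, lam4, lam5, lam6}

/-- Every type is (uniquely) a structure for the empty language. -/
instance (M : Type*) : Language.empty.Structure M := Language.emptyStructure

section
variable {M : Type*} [L.Structure M] [Nonempty M]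

lemma lam3_sem (h : M ⊨ SAPP) : ∀ x : M, ¬ RelMap oSym ![x,x] := by
  have := h.realize_of_mem lam3 (by right; simp)
  simp only [lam3, oBF, Sentence.Realize, BoundedFormula.realize_alls,
    BoundedFormula.realize_not, BoundedFormula.realize_rel₂, Term.realize_var] at this
  intro x
  have h2 := this ![x]
  convert h2 using 2 <;> ext i <;> fin_cases i <;> rfl

lemma lam5_sem (h : M ⊨ SAPP) : ∀ x : M, ∃ y, RelMap oSym ![x,y] := by
  have := h.realize_of_mem lam5 (by right; simp)
  simp only [lam5, oBF, Sentence.Realize, BoundedFormula.realize_alls,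
    BoundedFormula.realize_ex, BoundedFormula.realize_rel₂, Term.realize_var] at this
  intro x
  obtain ⟨y, hy⟩ := this ![x]
  refine ⟨y, ?_⟩
  convert hy using 1; ext i; fin_cases i <;> simp [Fin.snoc]

lemma lam2_sem (h : M ⊨ SAPP) : ∀ a b : M, ∃ s, ¬RelMap oSym ![s,a] ∧ ¬RelMap oSym ![s,b] := by
  have := h.realize_of_mem (lam2 2) (Set.mem_union_left _ (Set.mem_union_right _ ⟨2, le_refl 2, rfl⟩))
  simp only [lam2, oBF, andAll, Sentence.Realize, BoundedFormula.realize_alls,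
    BoundedFormula.realize_ex, BoundedFormula.realize_inf, BoundedFormula.realize_not,
    BoundedFormula.realize_rel₂, Term.realize_var, List.finRange, List.ofFn_succ, List.ofFn_zero, List.map,
    BoundedFormula.realize_top, and_true] at this
  intro a b
  obtain ⟨s, hs⟩ := this ![a, b]
  refine ⟨s, ?_, ?_⟩
  · convert hs.1 using 2; ext i; fin_cases i <;> simp
  · convert hs.2 using 2; ext i; fin_cases i <;> simp
end

section
variable {M : Type*} [L.Structure M] [Nonempty M]

lemma empty_invariant (φ : Language.empty.Formula (Fin 2)) {a b c d : M}
    (hab : a ≠ b) (hcd : c ≠ d) : φ.Realize ![a, b] ↔ φ.Realize ![c, d] := by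
  classical
  let e₁ : Equiv.Perm M := Equiv.swap a c
  have h1a : e₁ a = c := Equiv.swap_apply_left a c
  have hbc : e₁ b ≠ c := by
    rw [← h1a]; exact fun hh => hab.symm (e₁.injective hh)
  let e₂ : Equiv.Perm M := Equiv.swap (e₁ b) d
  let e' : Equiv.Perm M := e₁.trans e₂
  have hea : e' a = c := by
    show e₂ (e₁ a) = c
    rw [h1a]
    exact Equiv.swap_apply_of_ne_of_ne hbc.symm hcd
  have heb : e' b = d := Equiv.swap_apply_left (e₁ b) d
  have hcomp : e' ∘ ![a, b] = ![c, d] := by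
    ext i; fin_cases i <;> simp [hea, heb]
  have := StrongHomClass.realize_formula e' φ (v := ![a, b])
  rw [hcomp] at this
  exact this.symm
end


/-- in no model of SAPP is O definable by a formula of the empty language
(a formula built using only equality). -/
theorem statement_7 (M : Type*) [L.Structure M] [Nonempty M] (h : M ⊨ SAPP) :
    ¬ ∃ φ : Language.empty.Formula (Fin 2),
      ∀ a b : M, RelMap oSym ![a, b] ↔ φ.Realize ![a, b] := by
  rintro ⟨φ, hφ⟩
  obtain ⟨x⟩ := ‹Nonempty M›
  obtain ⟨y, hxy⟩ := lam5_sem h x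
  have hne : x ≠ y := fun hh => lam3_sem h x (hh ▸ hxy)
  have hall : ∀ c d : M, c ≠ d → RelMap oSym ![c, d] := fun c d hcd =>
    (hφ c d).2 ((empty_invariant φ hcd hne).2 ((hφ x y).1 hxy))
  obtain ⟨s, hs1, hs2⟩ := lam2_sem h x y
  have hsx : s = x := by_contra fun hh => hs1 (hall s x hh)
  have hsy : s = y := by_contra fun hh => hs2 (hall s y hh)
  exact hne (hsx ▸ hsy)
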